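/- arXiv:1401.0752 — 2 statements merged into one kernel-verified Lean document; each statement's English description precedes it below -/
import Mathlib

section
/- Let I ⊆ ℕ and let M_I be the monoid presented by ⟨a,b,c,d | a·bⁱ·c = a·bⁱ·d (i ∈ I)⟩, with π : F → M_I the quotient map from the free monoid F on {a,b,c,d}. For all words w, u ∈ F with π(w) = π(u): |w| = |u|, and for every k with 1 ≤ k ≤ |w|, the length-k prefixes satisfy π(w[k]) = π(u[k]). -/
/-- The four-letter alphabet `{a, b, c, d}`. -/
inductive Alpha : Type
  | a | b | c | d

/-- The defining relations of `M_I`: `a·bⁱ·c = a·bⁱ·d` for `i ∈ I`. -/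
def relI (I : Set ℕ) : FreeMonoid Alpha → FreeMonoid Alpha → Prop :=
  fun x y => ∃ i ∈ I,
    x = FreeMonoid.of Alpha.a * FreeMonoid.of Alpha.b ^ i * FreeMonoid.of Alpha.c ∧
    y = FreeMonoid.of Alpha.a * FreeMonoid.of Alpha.b ^ i * FreeMonoid.of Alpha.d

/-- The monoid congruence on the free monoid on `{a,b,c,d}` generated by the relations
`a·bⁱ·c = a·bⁱ·d` for `i ∈ I`; the monoid `M_I` is its quotient `(conI I).Quotient`,
with quotient map `(conI I).mk'`. -/
def conI (I : Set ℕ) : Con (FreeMonoid Alpha) := conGen (relI I)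

private lemma toList_pow_b (x : Alpha) (i : ℕ) :
    FreeMonoid.toList (FreeMonoid.of x ^ i) = List.replicate i x := by
  induction i with
  | zero => rfl
  | succ n ihn =>
      rw [pow_succ, FreeMonoid.toList_mul, ihn, List.replicate_succ']
      rfl

/-- In `M_I`, equal words have equal length and, for every `1 ≤ k ≤ |w|`, equal
length-`k` prefixes. -/
theorem mi_equal_words_prefixes (I : Set ℕ) (w u : FreeMonoid Alpha)
    (h : (conI I).mk' w = (conI I).mk' u) :
    w.length = u.length ∧
    ∀ k : ℕ, 1 ≤ k → k ≤ w.length →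
      (conI I).mk' (FreeMonoid.ofList (w.toList.take k)) =
        (conI I).mk' (FreeMonoid.ofList (u.toList.take k)) := by
  have key : ∀ w u : FreeMonoid Alpha, conI I w u →
      w.length = u.length ∧
      ∀ k : ℕ, 1 ≤ k → k ≤ w.length →
        conI I (FreeMonoid.ofList (w.toList.take k)) (FreeMonoid.ofList (u.toList.take k)) := by
    intro w u h
    induction h with
    | of x y hxy =>
        obtain ⟨i, hi, hx, hy⟩ := hxy
        have hxl : x.toList = (Alpha.a :: List.replicate i Alpha.b) ++ [Alpha.c] := by
          rw [hx, FreeMonoid.toList_mul, FreeMonoid.toList_mul, toList_pow_b]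
          rfl
        have hyl : y.toList = (Alpha.a :: List.replicate i Alpha.b) ++ [Alpha.d] := by
          rw [hy, FreeMonoid.toList_mul, FreeMonoid.toList_mul, toList_pow_b]
          rfl
        have hlx : x.length = i + 2 := by
          show x.toList.length = i + 2
          simp [hxl]
        have hly : y.length = i + 2 := by
          show y.toList.length = i + 2
          simp [hyl]
        refine ⟨by rw [hlx, hly], ?_⟩
        intro k hk1 hk2
        rw [hlx] at hk2
        by_cases hk : k ≤ i + 1
        · rw [hxl, hyl, List.take_append_of_le_length (by simp [hk]),
            List.take_append_of_le_length (by simp [hk])]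
          exact (conI I).refl _
        · have hke : k = i + 2 := by omega
          rw [List.take_of_length_le (by rw [show x.toList.length = x.length from rfl, hlx, hke]),
            List.take_of_length_le (by rw [show y.toList.length = y.length from rfl, hly, hke]),
            FreeMonoid.ofList_toList, FreeMonoid.ofList_toList]
          exact ConGen.Rel.of x y ⟨i, hi, hx, hy⟩
    | refl x => exact ⟨rfl, fun k _ _ => (conI I).refl _⟩
    | symm _ ih =>
        obtain ⟨hl, hp⟩ := ih
        exact ⟨hl.symm, fun k hk1 hk2 => (conI I).symm (hp k hk1 (hl ▸ hk2))⟩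
    | trans _ _ ih1 ih2 =>
        obtain ⟨hl1, hp1⟩ := ih1
        obtain ⟨hl2, hp2⟩ := ih2
        exact ⟨hl1.trans hl2, fun k hk1 hk2 =>
          (conI I).trans (hp1 k hk1 hk2) (hp2 k hk1 (hl1 ▸ hk2))⟩
    | @mul w₁ u₁ w₂ u₂ h1 h2 ih1 ih2 =>
        obtain ⟨hl1, hp1⟩ := ih1
        obtain ⟨hl2, hp2⟩ := ih2
        have e1 : w₁.toList.length = w₁.length := rfl
        have e2 : u₁.toList.length = u₁.length := rfl
        have e3 : w₂.toList.length = w₂.length := rfl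
        have e4 : u₂.toList.length = u₂.length := rfl
        refine ⟨by rw [FreeMonoid.length_mul, FreeMonoid.length_mul, hl1, hl2], ?_⟩
        intro k hk1 hk2
        rw [FreeMonoid.length_mul] at hk2
        rw [FreeMonoid.toList_mul, FreeMonoid.toList_mul]
        by_cases hk : k ≤ w₁.length
        · rw [List.take_append_of_le_length (by omega),
            List.take_append_of_le_length (by omega)]
          exact hp1 k hk1 hk
        · push_neg at hk
          rw [List.take_append, List.take_append,
            List.take_of_length_le (show (FreeMonoid.toList w₁).length ≤ k by omega),
            List.take_of_length_le (show (FreeMonoid.toList u₁).length ≤ k by omega)]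
          have f1 : FreeMonoid.ofList (w₁.toList ++ (w₂.toList.take (k - w₁.toList.length)))
              = w₁ * FreeMonoid.ofList (w₂.toList.take (k - w₁.toList.length)) := rfl
          have f2 : FreeMonoid.ofList (u₁.toList ++ (u₂.toList.take (k - u₁.toList.length)))
              = u₁ * FreeMonoid.ofList (u₂.toList.take (k - u₁.toList.length)) := rfl
          rw [f1, f2, show u₁.toList.length = w₁.toList.length by omega]
          exact (conI I).mul h1 (hp2 _ (by omega) (by omega))
  simp only [Con.coe_mk'] at h ⊢
  rw [Con.eq] at h
  obtain ⟨hl, hp⟩ := key w u h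
  exact ⟨hl, fun k hk1 hk2 => (conI I).eq.mpr (hp k hk1 hk2)⟩
end

section
/- Let I ⊆ ℕ and let M_I be the monoid presented by ⟨a,b,c,d | a·bⁱ·c = a·bⁱ·d (i ∈ I)⟩. Then M_I is right cancellative: for all x, y, z ∈ M_I, x·z = y·z implies x = y. Moreover M_I is J-trivial: for all x, y ∈ M_I, if there exist p, q, r, s ∈ M_I with p·x·q = y and r·y·s = x, then x = y. -/
open Classical in
/-- State automaton: tracks whether the word read so far ends in `a·bⁱ` (state `some i`). -/
def St : Option ℕ → List Alpha → Option ℕ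
  | s, [] => s
  | _, .a :: t => St (some 0) t
  | s, .b :: t => St (s.map Nat.succ) t
  | _, .c :: t => St none t
  | _, .d :: t => St none t

/-- The state is "eligible" if it is `some i` with `i ∈ I`. -/
def okS (I : Set ℕ) (s : Option ℕ) : Prop := ∃ i ∈ I, s = some i

open Classical in
/-- Normal form: replace every `d` immediately preceded by `a·bⁱ` with `i ∈ I` by `c`. -/
noncomputable def Nf (I : Set ℕ) : Option ℕ → List Alpha → List Alpha
  | _, [] => []
  | _, .a :: t => .a :: Nf I (some 0) t
  | s, .b :: t => .b :: Nf I (s.map Nat.succ) t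
  | _, .c :: t => .c :: Nf I none t
  | s, .d :: t => (if okS I s then Alpha.c else Alpha.d) :: Nf I none t

lemma length_Nf (I : Set ℕ) : ∀ (s : Option ℕ) (w : List Alpha),
    (Nf I s w).length = w.length := by
  intro s w
  induction w generalizing s with
  | nil => simp [Nf]
  | cons x t ih => cases x <;> simp [Nf, ih]

lemma St_append : ∀ (u v : List Alpha) (s : Option ℕ),
    St s (u ++ v) = St (St s u) v := by
  intro u
  induction u with
  | nil => intro v s; rfl
  | cons x t ih => intro v s; cases x <;> simp [St, ih]

lemma Nf_append (I : Set ℕ) : ∀ (u v : List Alpha) (s : Option ℕ),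
    Nf I s (u ++ v) = Nf I s u ++ Nf I (St s u) v := by
  intro u
  induction u with
  | nil => intro v s; rfl
  | cons x t ih => intro v s; cases x <;> simp [Nf, St, ih]

lemma Nf_replicate_b (I : Set ℕ) : ∀ (i : ℕ) (s : Option ℕ),
    Nf I s (List.replicate i Alpha.b) = List.replicate i Alpha.b := by
  intro i
  induction i with
  | zero => intro s; rfl
  | succ n ih => intro s; simp [List.replicate_succ, Nf, ih]

lemma St_replicate_b : ∀ (i k : ℕ),
    St (some k) (List.replicate i Alpha.b) = some (k + i) := by
  intro i
  induction i with
  | zero => intro k; rfl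
  | succ n ih =>
      intro k
      simp only [List.replicate_succ, St, Option.map_some]
      rw [ih]
      congr 1
      omega

lemma toList_pow_of (x : Alpha) (i : ℕ) :
    (FreeMonoid.of x ^ i).toList = List.replicate i x := by
  induction i with
  | zero => rfl
  | succ n ih =>
      rw [pow_succ, FreeMonoid.toList_mul, ih, FreeMonoid.toList_of,
        List.replicate_succ']

/-- The congruence "same normal form and same state, from any starting state". -/
def nfCon (I : Set ℕ) : Con (FreeMonoid Alpha) where
  r u v := ∀ s, Nf I s u.toList = Nf I s v.toList ∧ St s u.toList = St s v.toList
  iseqv := by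
    constructor
    · intro x s; exact ⟨rfl, rfl⟩
    · intro x y h s; exact ⟨(h s).1.symm, (h s).2.symm⟩
    · intro x y z h1 h2 s; exact ⟨(h1 s).1.trans (h2 s).1, (h1 s).2.trans (h2 s).2⟩
  mul' := by
    intro a b c d h1 h2 s
    simp only [FreeMonoid.toList_mul, Nf_append, St_append]
    rw [(h1 s).1, (h1 s).2, (h2 (St s b.toList)).1, (h2 (St s b.toList)).2]
    exact ⟨rfl, rfl⟩

lemma conI_le_nfCon (I : Set ℕ) : conI I ≤ nfCon I := by
  apply Con.conGen_le.mpr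
  rintro x y ⟨i, hi, hx, hy⟩ s
  subst hx hy
  simp only [FreeMonoid.toList_mul, FreeMonoid.toList_of, toList_pow_of]
  have hcalc : ∀ z : Alpha,
      Nf I s (([Alpha.a] ++ List.replicate i Alpha.b) ++ [z]) =
        [Alpha.a] ++ List.replicate i Alpha.b ++ Nf I (some i) [z] ∧
      St s (([Alpha.a] ++ List.replicate i Alpha.b) ++ [z]) = St (some i) [z] := by
    intro z
    rw [Nf_append, St_append, St_append]
    constructor
    · simp [Nf, St, Nf_replicate_b, St_replicate_b]
    · simp [St, St_replicate_b]
  have h1 := hcalc Alpha.c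
  have h2 := hcalc Alpha.d
  refine ⟨?_, ?_⟩
  · rw [h1.1, h2.1]
    have : okS I (some i) := ⟨i, hi, rfl⟩
    simp [Nf, this]
  · rw [h1.2, h2.2]
    rfl

lemma conI_length (I : Set ℕ) {u v : FreeMonoid Alpha} (h : conI I u v) :
    u.toList.length = v.toList.length := by
  have := (conI_le_nfCon I h none).1
  calc u.toList.length = (Nf I none u.toList).length := (length_Nf I none _).symm
    _ = (Nf I none v.toList).length := by rw [this]
    _ = v.toList.length := length_Nf I none _

/-- One rewriting step in context. -/
lemma rewriteStep (I : Set ℕ) {i : ℕ} (hi : i ∈ I) (u v : FreeMonoid Alpha) :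
    conI I (u * (FreeMonoid.of Alpha.a * FreeMonoid.of Alpha.b ^ i * FreeMonoid.of Alpha.d) * v)
      (u * (FreeMonoid.of Alpha.a * FreeMonoid.of Alpha.b ^ i * FreeMonoid.of Alpha.c) * v) := by
  have hrel : conI I (FreeMonoid.of Alpha.a * FreeMonoid.of Alpha.b ^ i * FreeMonoid.of Alpha.c)
      (FreeMonoid.of Alpha.a * FreeMonoid.of Alpha.b ^ i * FreeMonoid.of Alpha.d) :=
    ConGen.Rel.of _ _ ⟨i, hi, rfl, rfl⟩
  exact (conI I).mul ((conI I).mul ((conI I).refl u) ((conI I).symm hrel)) ((conI I).refl v)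

/-- `Good u s`: if the state is `some i`, then `u` ends with `a·bⁱ`. -/
def Good (u : List Alpha) (s : Option ℕ) : Prop :=
  ∀ i, s = some i → ∃ u', u = u' ++ [Alpha.a] ++ List.replicate i Alpha.b

lemma conI_nf (I : Set ℕ) : ∀ (w u : List Alpha) (s : Option ℕ), Good u s →
    conI I (FreeMonoid.ofList (u ++ w)) (FreeMonoid.ofList (u ++ Nf I s w)) := by
  intro w
  induction w with
  | nil => intro u s _; exact (conI I).refl _
  | cons x t ih =>
    intro u s hg
    cases x with
    | a =>
        have : u ++ Alpha.a :: t = (u ++ [Alpha.a]) ++ t := by simp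
        rw [this, show u ++ Nf I s (Alpha.a :: t) = (u ++ [Alpha.a]) ++ Nf I (some 0) t by
          simp [Nf]]
        exact ih (u ++ [Alpha.a]) (some 0) (by
          intro i hi
          obtain rfl : (0 : ℕ) = i := by injection hi
          exact ⟨u, by simp⟩)
    | b =>
        have : u ++ Alpha.b :: t = (u ++ [Alpha.b]) ++ t := by simp
        rw [this, show u ++ Nf I s (Alpha.b :: t) = (u ++ [Alpha.b]) ++ Nf I (s.map Nat.succ) t by
          simp [Nf]]
        refine ih (u ++ [Alpha.b]) (s.map Nat.succ) ?_
        intro i hi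
        cases s with
        | none => simp at hi
        | some j =>
            obtain rfl : j.succ = i := by simpa using hi
            obtain ⟨u', hu'⟩ := hg j rfl
            exact ⟨u', by simp [hu', List.replicate_succ']⟩
    | c =>
        have : u ++ Alpha.c :: t = (u ++ [Alpha.c]) ++ t := by simp
        rw [this, show u ++ Nf I s (Alpha.c :: t) = (u ++ [Alpha.c]) ++ Nf I none t by
          simp [Nf]]
        exact ih (u ++ [Alpha.c]) none (by intro i hi; simp at hi)
    | d =>
        by_cases hok : okS I s
        · obtain ⟨i, hi, rfl⟩ := hok.imp fun i h => h
          obtain ⟨i, hi, hs⟩ := hok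
          obtain rfl : _ = i := by injection hs
          obtain ⟨u', rfl⟩ := hg i rfl
          have step1 : conI I (FreeMonoid.ofList ((u' ++ [Alpha.a] ++ List.replicate i Alpha.b) ++ Alpha.d :: t))
              (FreeMonoid.ofList ((u' ++ [Alpha.a] ++ List.replicate i Alpha.b) ++ Alpha.c :: t)) := by
            have h := rewriteStep I hi (FreeMonoid.ofList u') (FreeMonoid.ofList t)
            have e1 : FreeMonoid.ofList u' * (FreeMonoid.of Alpha.a * FreeMonoid.of Alpha.b ^ i * FreeMonoid.of Alpha.d) * FreeMonoid.ofList t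
                = FreeMonoid.ofList ((u' ++ [Alpha.a] ++ List.replicate i Alpha.b) ++ Alpha.d :: t) := by
              apply FreeMonoid.toList.injective
              simp [FreeMonoid.toList_mul, toList_pow_of]
            have e2 : FreeMonoid.ofList u' * (FreeMonoid.of Alpha.a * FreeMonoid.of Alpha.b ^ i * FreeMonoid.of Alpha.c) * FreeMonoid.ofList t
                = FreeMonoid.ofList ((u' ++ [Alpha.a] ++ List.replicate i Alpha.b) ++ Alpha.c :: t) := by
              apply FreeMonoid.toList.injective
              simp [FreeMonoid.toList_mul, toList_pow_of]
            rwa [e1, e2] at h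
          refine (conI I).trans step1 ?_
          set u := u' ++ [Alpha.a] ++ List.replicate i Alpha.b with hu
          have step2 := ih (u ++ [Alpha.c]) none (by intro j hj; simp at hj)
          have e3 : (u ++ [Alpha.c]) ++ t = u ++ Alpha.c :: t := by simp
          have e4 : (u ++ [Alpha.c]) ++ Nf I none t = u ++ Nf I (some i) (Alpha.d :: t) := by
            have : okS I (some i) := ⟨i, hi, rfl⟩
            simp [Nf, this]
          rw [e3, e4] at step2
          exact step2
        · rw [show u ++ Nf I s (Alpha.d :: t) = (u ++ [Alpha.d]) ++ Nf I none t by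
            simp [Nf, hok]]
          have : u ++ Alpha.d :: t = (u ++ [Alpha.d]) ++ t := by simp
          rw [this]
          exact ih (u ++ [Alpha.d]) none (by intro i hi; simp at hi)

/-- Every word is congruent to its normal form. -/
lemma conI_nf' (I : Set ℕ) (w : FreeMonoid Alpha) :
    conI I w (FreeMonoid.ofList (Nf I none w.toList)) := by
  have := conI_nf I w.toList [] none (by intro i hi; simp at hi)
  simpa [FreeMonoid.ofList_toList] using this

/-- Two words are congruent iff they have the same normal form. -/
lemma conI_iff_nf (I : Set ℕ) (u v : FreeMonoid Alpha) :
    conI I u v ↔ Nf I none u.toList = Nf I none v.toList := by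
  constructor
  · intro h; exact (conI_le_nfCon I h none).1
  · intro h
    refine (conI I).trans (conI_nf' I u) ?_
    rw [h]
    exact (conI I).symm (conI_nf' I v)

/-- `M_I` is right cancellative and `J`-trivial. -/
theorem mi_rightCancellative_jTrivial (I : Set ℕ) :
    (∀ x y z : (conI I).Quotient, x * z = y * z → x = y) ∧
    (∀ x y : (conI I).Quotient,
      (∃ p q : (conI I).Quotient, p * x * q = y) →
      (∃ r s : (conI I).Quotient, r * y * s = x) → x = y) := by
  constructor
  · intro x y z h
    obtain ⟨x, rfl⟩ := Con.mk'_surjective x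
    obtain ⟨y, rfl⟩ := Con.mk'_surjective y
    obtain ⟨z, rfl⟩ := Con.mk'_surjective z
    rw [← map_mul, ← map_mul, Con.coe_mk', Con.eq] at h
    rw [Con.coe_mk', Con.eq]
    rw [conI_iff_nf] at h ⊢
    rw [FreeMonoid.toList_mul, FreeMonoid.toList_mul, Nf_append, Nf_append] at h
    have hlenx : (Nf I none x.toList).length = x.toList.length := length_Nf I none _
    have hleny : (Nf I none y.toList).length = y.toList.length := length_Nf I none _
    have hlen : x.toList.length = y.toList.length := by
      have := congrArg List.length h
      simp only [List.length_append, length_Nf] at this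
      omega
    exact (List.append_inj h (by omega)).1
  · intro x y hpq hrs
    obtain ⟨p, q, hpq⟩ := hpq
    obtain ⟨r, s, hrs⟩ := hrs
    obtain ⟨x, rfl⟩ := Con.mk'_surjective x
    obtain ⟨y, rfl⟩ := Con.mk'_surjective y
    obtain ⟨p, rfl⟩ := Con.mk'_surjective p
    obtain ⟨q, rfl⟩ := Con.mk'_surjective q
    obtain ⟨r, rfl⟩ := Con.mk'_surjective r
    obtain ⟨s, rfl⟩ := Con.mk'_surjective s
    rw [← map_mul, ← map_mul, Con.coe_mk', Con.eq] at hpq hrs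
    have h1 := conI_length I hpq
    have h2 := conI_length I hrs
    simp only [FreeMonoid.toList_mul, List.length_append] at h1 h2
    have hp : p.toList.length = 0 := by omega
    have hq : q.toList.length = 0 := by omega
    have hp' : p = 1 := by
      apply FreeMonoid.toList.injective
      simpa using List.length_eq_zero_iff.mp hp
    have hq' : q = 1 := by
      apply FreeMonoid.toList.injective
      simpa using List.length_eq_zero_iff.mp hq
    subst hp' hq'
    rw [one_mul, mul_one] at hpq
    rw [Con.coe_mk', Con.eq]
    exact hpq
end
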